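/- Let G(s) = (H(s) - s^{\kappa})/(1-s) as above with h_0 > 0. If H'(1) > \kappa then G has exactly one zero in (0,1), which is simple, and G(1) \neq 0. If H'(1) = \kappa, then G(s) > 0 for s \in [0,1) and G(1) = 0. If H'(1) < \kappa, then G(s) > 0 for all s \in [0,1]. -/

import Mathlib

open scoped ENNReal
open Finset Set

private lemma aux_count10 (c : ℝ≥0∞) (k : ℕ) : ∑' n : ℕ, (if n < k then c else 0) = k * c := by
  rw [tsum_eq_sum (s := Finset.range k) (fun n hn => if_neg (by simpa using hn))]
  rw [Finset.sum_congr rfl (fun n hn => if_pos (Finset.mem_range.mp hn))]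
  simp [Finset.sum_const, nsmul_eq_mul]

private lemma aux_summable10 {f : ℕ → ℝ} (hf : ∀ n, 0 ≤ f n)
    (h : ∑' n, ENNReal.ofReal (f n) ≠ ⊤) : Summable f := by
  have h2 : Summable fun n => Real.toNNReal (f n) := ENNReal.tsum_coe_ne_top_iff_summable.mp h
  have h3 := NNReal.summable_coe.mpr h2
  exact h3.congr fun n => Real.coe_toNNReal _ (hf n)

set_option maxHeartbeats 4000000 in
theorem stmt_10 (h : ℕ → ℝ) (hnn : ∀ k, 0 ≤ h k) (hsum : HasSum h 1)
    (h0 : 0 < h 0) (κ : ℕ) (hκ : 1 ≤ κ)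
    (g : ℕ → ℝ)
    (hg : ∀ n : ℕ, g n = (∑ k ∈ Finset.range (n + 1), h k) - if κ ≤ n then 1 else 0)
    (G : ℝ → ℝ) (hG : ∀ s : ℝ, G s = ∑' n : ℕ, g n * s ^ n)
    (E : ℝ≥0∞) (hE : E = ∑' n : ℕ, ENNReal.ofReal ((n : ℝ) * h n)) :
    ((κ : ℝ≥0∞) < E →
      (∃ z ∈ Set.Ioo (0 : ℝ) 1, G z = 0 ∧ deriv G z ≠ 0 ∧
        ∀ w ∈ Set.Ioo (0 : ℝ) 1, G w = 0 → w = z) ∧ ¬ HasSum g 0) ∧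
    (E = (κ : ℝ≥0∞) →
      (∀ s ∈ Set.Ico (0 : ℝ) 1, 0 < G s) ∧ HasSum g 0) ∧
    (E < (κ : ℝ≥0∞) → ∀ s ∈ Set.Icc (0 : ℝ) 1, 0 < G s) := by
  set a : ℕ → ℝ := fun n => ∑ k ∈ Finset.range (n + 1), h k with ha_def
  set t : ℕ → ℝ := fun n => 1 - a n with ht_def
  have ha_pos : ∀ n, 0 < a n := fun n =>
    lt_of_lt_of_le h0 (Finset.single_le_sum (fun k _ => hnn k) (Finset.mem_range.mpr (Nat.succ_pos n)))
  have ha_le : ∀ n, a n ≤ 1 := fun n => sum_le_hasSum _ (fun k _ => hnn k) hsum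
  have ht_nn : ∀ n, 0 ≤ t n := fun n => by simp [ht_def, ha_le n]
  have ht_le : ∀ n, t n ≤ 1 := fun n => by
    have := ha_pos n; simp only [ht_def]; linarith
  have hglt : ∀ n, n < κ → g n = a n := fun n hn => by
    rw [hg n, if_neg (not_le.mpr hn), sub_zero]
  have hgge : ∀ n, κ ≤ n → g n = -(t n) := fun n hn => by
    rw [hg n, if_pos hn]; simp [ht_def, ha_def]
  have habs : ∀ n, |g n| ≤ 1 := fun n => by
    rcases lt_or_ge n κ with hn | hn
    · rw [hglt n hn, abs_of_pos (ha_pos n)]; exact ha_le n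
    · rw [hgge n hn, abs_neg, abs_of_nonneg (ht_nn n)]; exact ht_le n
  -- A and B
  set A : ℝ → ℝ := fun s => ∑ n ∈ Finset.range κ, a n * s ^ n with hA_def
  set B : ℝ → ℝ := fun s => ∑' n : ℕ, t (n + κ) * s ^ (n + κ) with hB_def
  have hgeo : ∀ s : ℝ, |s| < 1 → Summable (fun n : ℕ => |s| ^ n) := fun s hs =>
    summable_geometric_of_lt_one (abs_nonneg s) hs
  have hsummg : ∀ s : ℝ, |s| < 1 → Summable (fun n => g n * s ^ n) := fun s hs => by
    apply Summable.of_norm_bounded (hgeo s hs)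
    intro n
    rw [norm_mul, norm_pow]
    calc ‖g n‖ * |s| ^ n ≤ 1 * |s| ^ n :=
          mul_le_mul_of_nonneg_right (habs n) (by positivity)
      _ = |s| ^ n := one_mul _
  have hsummB : ∀ s : ℝ, |s| < 1 → Summable (fun n => t (n + κ) * s ^ (n + κ)) := fun s hs => by
    apply Summable.of_norm_bounded ((summable_nat_add_iff κ).mpr (hgeo s hs))
    intro n
    rw [norm_mul, norm_pow]
    calc ‖t (n + κ)‖ * |s| ^ (n + κ) ≤ 1 * |s| ^ (n + κ) := by
          apply mul_le_mul_of_nonneg_right _ (by positivity)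
          rw [Real.norm_eq_abs, abs_of_nonneg (ht_nn _)]; exact ht_le _
      _ = |s| ^ (n + κ) := one_mul _
  have hGAB : ∀ s : ℝ, |s| < 1 → G s = A s - B s := fun s hs => by
    have h1 := (hsummg s hs).sum_add_tsum_nat_add κ
    rw [hG s, ← h1]
    have h2 : ∑ n ∈ Finset.range κ, g n * s ^ n = A s :=
      Finset.sum_congr rfl fun n hn => by rw [hglt n (Finset.mem_range.mp hn)]
    have h3 : ∑' n : ℕ, g (n + κ) * s ^ (n + κ) = -B s := by
      rw [hB_def, ← tsum_neg]
      congr 1; funext n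
      rw [hgge (n + κ) (Nat.le_add_left κ n)]; ring
    rw [h2, h3]; ring
  have hApos : ∀ s : ℝ, 0 ≤ s → 0 < A s := fun s hs => by
    have h1 : a 0 * s ^ 0 ≤ A s :=
      Finset.single_le_sum (f := fun n => a n * s ^ n)
        (fun n _ => mul_nonneg (ha_pos n).le (pow_nonneg hs n)) (Finset.mem_range.mpr hκ)
    have h2 : (0:ℝ) < a 0 * s ^ 0 := by simpa using ha_pos 0
    exact lt_of_lt_of_le h2 h1
  have hAle : ∀ s : ℝ, 0 ≤ s → s ≤ 1 → A s ≤ A 1 :=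
    fun s hs hs1 => Finset.sum_le_sum fun n _ => by
      have : s ^ n ≤ 1 ^ n := pow_le_pow_left₀ hs hs1 n
      nlinarith [ha_pos n, this]
  have hA1pos : 0 < A 1 := hApos 1 zero_le_one
  -- E as sum of tails
  have ht_tsum : ∀ n, ∑' k, h (k + (n + 1)) = t n := fun n => by
    have h1 := hsum.summable.sum_add_tsum_nat_add (n + 1)
    rw [hsum.tsum_eq] at h1
    simp only [ht_def, ha_def]
    linarith [h1]
  have hφs : ∀ n : ℕ, Summable (fun k => if n < k then h k else 0) := fun n =>
    hsum.summable.of_nonneg_of_le (fun k => by split_ifs <;> simp [hnn k])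
      (fun k => by split_ifs <;> simp [hnn k])
  have htind : ∀ n, ∑' k, (if n < k then h k else 0) = t n := fun n => by
    have hψs : Summable (fun k => if n < k then 0 else h k) :=
      hsum.summable.of_nonneg_of_le (fun k => by split_ifs <;> simp [hnn k])
        (fun k => by split_ifs <;> simp [hnn k])
    have hψ : ∑' k, (if n < k then 0 else h k) = a n := by
      rw [tsum_eq_sum (s := Finset.range (n + 1))
        (fun k hk => if_pos (by simpa using Nat.lt_of_succ_le (Nat.le_of_not_lt
          (fun hc => hk (Finset.mem_range.mpr hc)))))]
      exact Finset.sum_congr rfl fun k hk =>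
        if_neg (by simpa using Nat.lt_succ_iff.mp (Finset.mem_range.mp hk))
    have hck : ∀ k, (if n < k then h k else 0) + (if n < k then 0 else h k) = h k := fun k => by
      split_ifs <;> simp
    have h1 : ∑' k, ((if n < k then h k else 0) + (if n < k then 0 else h k)) = 1 := by
      rw [tsum_congr hck, hsum.tsum_eq]
    rw [Summable.tsum_add (hφs n) hψs, hψ] at h1
    simp only [ht_def]
    linarith
  have hEt : E = ∑' n : ℕ, ENNReal.ofReal (t n) := by
    rw [hE]
    have h1 : ∀ k : ℕ, ENNReal.ofReal ((k : ℝ) * h k)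
        = ∑' n : ℕ, (if n < k then ENNReal.ofReal (h k) else 0) := fun k => by
      rw [aux_count10, ENNReal.ofReal_mul (by positivity), ENNReal.ofReal_natCast]
    rw [tsum_congr h1, ENNReal.tsum_comm]
    refine tsum_congr fun n => ?_
    have h2 : ∀ k : ℕ, (if n < k then ENNReal.ofReal (h k) else 0)
        = ENNReal.ofReal (if n < k then h k else 0) := fun k => by split_ifs <;> simp
    rw [tsum_congr h2, ← ENNReal.ofReal_tsum_of_nonneg
      (fun k => by split_ifs <;> simp [hnn k]) (hφs n), htind n]
  set TB : ℝ≥0∞ := ∑' n : ℕ, ENNReal.ofReal (t (n + κ)) with hTB_def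
  have hEsplit : E = (∑ n ∈ Finset.range κ, ENNReal.ofReal (t n)) + TB := by
    rw [hEt, hTB_def]
    exact (ENNReal.summable.sum_add_tsum_nat_add').symm
  have hA1 : A 1 = ∑ n ∈ Finset.range κ, a n := by simp [hA_def]
  have hκsplit : (κ : ℝ≥0∞) = (∑ n ∈ Finset.range κ, ENNReal.ofReal (t n)) + ENNReal.ofReal (A 1) := by
    rw [hA1, ENNReal.ofReal_sum_of_nonneg (fun n _ => (ha_pos n).le), ← Finset.sum_add_distrib]
    rw [Finset.sum_congr rfl (fun n (_ : n ∈ Finset.range κ) => by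
      rw [← ENNReal.ofReal_add (ht_nn n) (ha_pos n).le]
      simp [ht_def] : ∀ n ∈ Finset.range κ, ENNReal.ofReal (t n) + ENNReal.ofReal (a n) = 1)]
    simp
  have hSlt : (∑ n ∈ Finset.range κ, ENNReal.ofReal (t n)) ≠ ⊤ :=
    (ENNReal.sum_lt_top.mpr fun n _ => ENNReal.ofReal_lt_top).ne
  -- summability of t from finite E, and value of sums
  have hsumt : E ≠ ⊤ → Summable t := fun hne =>
    aux_summable10 ht_nn (by rw [← hEt]; exact hne)
  have hEoR : Summable t → E = ENNReal.ofReal (∑' n, t n) := fun hst => by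
    rw [hEt, ENNReal.ofReal_tsum_of_nonneg ht_nn hst]
  have hgsum : Summable t → HasSum g ((κ : ℝ) - ∑' n, t n) := by
    intro hst
    have hsg : Summable g := by
      have h1 : Summable (fun n => g (n + κ)) :=
        (((summable_nat_add_iff κ).mpr hst).neg).congr
          (fun n => by rw [hgge (n + κ) (Nat.le_add_left κ n)])
      exact (summable_nat_add_iff κ).mp h1
    have h1 := hsg.sum_add_tsum_nat_add κ
    have h2 := hst.sum_add_tsum_nat_add κ
    have h3 : ∑' n, g (n + κ) = -∑' n, t (n + κ) := by
      rw [← tsum_neg]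
      exact tsum_congr fun n => by rw [hgge _ (Nat.le_add_left κ n)]
    have h4 : ∑ n ∈ Finset.range κ, g n = (κ : ℝ) - ∑ n ∈ Finset.range κ, t n := by
      rw [Finset.sum_congr rfl (fun n hn => by
        rw [hglt n (Finset.mem_range.mp hn)]
        simp [ht_def] : ∀ n ∈ Finset.range κ, g n = 1 - t n), Finset.sum_sub_distrib]
      simp
    have h5 : ∑' n, g n = (κ : ℝ) - ∑' n, t n := by
      rw [← h1, ← h2, h3, h4]; ring
    exact h5 ▸ hsg.hasSum
  have hgnot : ¬ Summable t → ¬ Summable g := by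
    intro hst hsg
    apply hst
    have h1 : Summable (fun n => t (n + κ)) :=
      (((summable_nat_add_iff κ).mpr hsg).neg).congr
        (fun n => by rw [hgge (n + κ) (Nat.le_add_left κ n)]; ring)
    exact (summable_nat_add_iff κ).mp h1
  -- positivity
  have hG0 : G 0 = h 0 := by
    rw [hG 0, tsum_eq_single 0 (fun n hn => by simp [zero_pow hn])]
    rw [hg 0]
    simp [Nat.not_le.mpr (Nat.lt_of_lt_of_le Nat.zero_lt_one hκ)]
  have hpos : TB ≤ ENNReal.ofReal (A 1) → ∀ s ∈ Set.Ico (0:ℝ) 1, 0 < G s := by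
    intro hTB s hs
    rcases eq_or_lt_of_le hs.1 with h1 | h1
    · rw [← h1, hG0]; exact h0
    · have hs1 : |s| < 1 := by rw [abs_of_pos h1]; exact hs.2
      have hstκ : Summable (fun n => t (n + κ)) :=
        aux_summable10 (fun n => ht_nn _) (lt_of_le_of_lt hTB ENNReal.ofReal_lt_top).ne
      have hTBr : ∑' n, t (n + κ) ≤ A 1 := by
        rw [hTB_def, ← ENNReal.ofReal_tsum_of_nonneg (fun n => ht_nn _) hstκ] at hTB
        exact (ENNReal.ofReal_le_ofReal_iff hA1pos.le).mp hTB
      have hBle : B s ≤ (∑' n, t (n + κ)) * s ^ κ := by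
        rw [hB_def, ← tsum_mul_right]
        refine Summable.tsum_le_tsum (fun n => ?_) (hsummB s hs1) (hstκ.mul_right _)
        have hp : s ^ (n + κ) ≤ s ^ κ := pow_le_pow_of_le_one h1.le hs.2.le (Nat.le_add_left κ n)
        exact mul_le_mul_of_nonneg_left hp (ht_nn _)
      have hAgt : A 1 * s ^ κ < A s := by
        rw [hA1, Finset.sum_mul]
        refine Finset.sum_lt_sum_of_nonempty (Finset.nonempty_range_iff.mpr (by omega)) fun n hn => ?_
        have hp : s ^ κ < s ^ n :=
          pow_lt_pow_right_of_lt_one₀ h1 hs.2 (Finset.mem_range.mp hn)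
        exact mul_lt_mul_of_pos_left hp (ha_pos n)
      have hmul : (∑' n, t (n + κ)) * s ^ κ ≤ A 1 * s ^ κ :=
        mul_le_mul_of_nonneg_right hTBr (pow_nonneg h1.le κ)
      rw [hGAB s hs1]
      linarith
  refine ⟨?_, ?_, ?_⟩
  · -- E > κ
    intro hEκ
    have hTBgt : ENNReal.ofReal (A 1) < TB := by
      rw [hEsplit, hκsplit] at hEκ
      exact (ENNReal.add_lt_add_iff_left hSlt).mp hEκ
    constructor
    · -- existence of the simple zero
      -- Step 1: a point where G is negative
      obtain ⟨N, hN⟩ : ∃ N : ℕ, A 1 < ∑ n ∈ Finset.range N, t (n + κ) := by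
        rw [hTB_def, ENNReal.tsum_eq_iSup_sum] at hTBgt
        obtain ⟨F, hF⟩ := lt_iSup_iff.mp hTBgt
        refine ⟨F.sup id + 1, ?_⟩
        have hsub : F ⊆ Finset.range (F.sup id + 1) := fun x hx =>
          Finset.mem_range.mpr (Nat.lt_succ_of_le (Finset.le_sup (f := id) hx))
        have h2 := Finset.sum_le_sum_of_subset (f := fun n => ENNReal.ofReal (t (n + κ))) hsub
        have h3 := lt_of_lt_of_le hF h2
        rw [← ENNReal.ofReal_sum_of_nonneg (fun n _ => ht_nn _)] at h3
        exact (ENNReal.ofReal_lt_ofReal_iff_of_nonneg hA1pos.le).mp h3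
      set p : ℝ → ℝ := fun s => ∑ n ∈ Finset.range N, t (n + κ) * s ^ (n + κ) with hp_def
      have hp_cont : Continuous p :=
        continuous_finset_sum _ fun n _ => continuous_const.mul (continuous_pow (n + κ))
      have hp1 : A 1 < p 1 := by simpa [hp_def] using hN
      have hev1 : ∀ᶠ x in nhdsWithin 1 (Set.Iio (1 : ℝ)), A 1 < p x :=
        ((hp_cont.continuousAt.continuousWithinAt (s := Set.Iio (1:ℝ))).tendsto).eventually
          (lt_mem_nhds hp1)
      have hev2 : ∀ᶠ x in nhdsWithin 1 (Set.Iio (1 : ℝ)), (0 : ℝ) < x :=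
        Filter.Eventually.filter_mono nhdsWithin_le_nhds (lt_mem_nhds zero_lt_one)
      have hev3 : ∀ᶠ x in nhdsWithin 1 (Set.Iio (1 : ℝ)), x < 1 :=
        eventually_mem_nhdsWithin
      obtain ⟨s₀, hps₀, hs₀0, hs₀1⟩ := (hev1.and (hev2.and hev3)).exists
      have habs₀ : |s₀| < 1 := by rw [abs_of_pos hs₀0]; exact hs₀1
      have hGs₀ : G s₀ < 0 := by
        have hple : p s₀ ≤ B s₀ := by
          rw [hB_def]
          exact Summable.sum_le_tsum (Finset.range N)
            (fun n _ => mul_nonneg (ht_nn _) (pow_nonneg hs₀0.le _)) (hsummB s₀ habs₀)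
        have := hAle s₀ hs₀0.le hs₀1.le
        rw [hGAB s₀ habs₀]
        linarith
      -- Step 2: IVT
      have hcont : ContinuousOn G (Set.Icc 0 s₀) := by
        have hGfun : G = fun x : ℝ => ∑' n, g n * x ^ n := funext hG
        rw [hGfun]
        apply continuousOn_tsum (u := fun n => s₀ ^ n)
          (fun i => (continuous_const.mul (continuous_pow i)).continuousOn)
          (summable_geometric_of_lt_one hs₀0.le hs₀1)
        intro n x hx
        have hxabs : |x| ≤ s₀ := abs_le.mpr ⟨by linarith [hx.1], hx.2⟩
        simp only [Pi.mul_apply]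
        rw [norm_mul, norm_pow, Real.norm_eq_abs, Real.norm_eq_abs]
        calc |g n| * |x| ^ n ≤ 1 * s₀ ^ n := by
              apply mul_le_mul (habs n) (pow_le_pow_left₀ (abs_nonneg x) hxabs n)
                (by positivity) zero_le_one
          _ = s₀ ^ n := one_mul _
      have hmem : (0 : ℝ) ∈ Set.Ioo (G s₀) (G 0) := ⟨hGs₀, by rw [hG0]; exact h0⟩
      obtain ⟨z, hzmem, hGz⟩ := intermediate_value_Ioo' hs₀0.le hcont hmem
      have hz01 : z ∈ Set.Ioo (0 : ℝ) 1 := ⟨hzmem.1, hzmem.2.trans hs₀1⟩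
      have habsz : |z| < 1 := by rw [abs_of_pos hz01.1]; exact hz01.2
      have hABz : A z = B z := by
        have := hGAB z habsz
        rw [hGz] at this
        linarith
      -- Step 3: key monotonicity for uniqueness
      obtain ⟨m, hm⟩ : ∃ m, 0 < t (m + κ) := by
        by_contra hc
        push_neg at hc
        have hz0 : ∀ m, t (m + κ) = 0 := fun m => le_antisymm (hc m) (ht_nn _)
        have : TB = 0 := by simp [hTB_def, hz0]
        rw [this] at hTBgt
        simp at hTBgt
      have hsummC : ∀ w : ℝ, |w| < 1 → Summable (fun n => t (n + κ) * w ^ n) := fun w hw => by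
        apply Summable.of_norm_bounded (hgeo w hw)
        intro n
        rw [norm_mul, norm_pow, Real.norm_eq_abs, Real.norm_eq_abs, abs_of_nonneg (ht_nn _)]
        calc t (n + κ) * |w| ^ n ≤ 1 * |w| ^ n :=
              mul_le_mul_of_nonneg_right (ht_le _) (by positivity)
          _ = |w| ^ n := one_mul _
      have hBC : ∀ w : ℝ, B w = (∑' n, t (n + κ) * w ^ n) * w ^ κ := fun w => by
        simp only [hB_def]
        rw [← tsum_mul_right]
        exact tsum_congr fun n => by rw [pow_add]; ring
      have key : ∀ u v : ℝ, 0 < u → u < v → v < 1 → B u * A v < B v * A u := by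
        intro u v hu huv hv1
        have hu1 : u < 1 := huv.trans hv1
        have habsu : |u| < 1 := by rw [abs_of_pos hu]; exact hu1
        have hv0 : 0 < v := hu.trans huv
        have habsv : |v| < 1 := by rw [abs_of_pos hv0]; exact hv1
        have hCle : (∑' n, t (n + κ) * u ^ n) ≤ ∑' n, t (n + κ) * v ^ n :=
          Summable.tsum_le_tsum (fun n => mul_le_mul_of_nonneg_left
            (pow_le_pow_left₀ hu.le huv.le n) (ht_nn _)) (hsummC u habsu) (hsummC v habsv)
        have hCv_pos : 0 < ∑' n, t (n + κ) * v ^ n := by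
          have h1 : t (m + κ) * v ^ m ≤ ∑' n, t (n + κ) * v ^ n :=
            Summable.le_tsum (hsummC v habsv) m
              (fun n _ => mul_nonneg (ht_nn _) (pow_nonneg hv0.le n))
          nlinarith [pow_pos hv0 m]
        have hpoly : u ^ κ * A v < v ^ κ * A u := by
          simp only [hA_def]
          rw [Finset.mul_sum, Finset.mul_sum]
          refine Finset.sum_lt_sum_of_nonempty (Finset.nonempty_range_iff.mpr (by omega))
            fun n hn => ?_
          have hnκ := Finset.mem_range.mp hn
          have e1 : u ^ κ = u ^ n * u ^ (κ - n) := by rw [← pow_add]; congr 1; omega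
          have e2 : v ^ κ = v ^ n * v ^ (κ - n) := by rw [← pow_add]; congr 1; omega
          have h3 : u ^ (κ - n) < v ^ (κ - n) :=
            pow_lt_pow_left₀ huv hu.le (by omega)
          have h4 : a n * u ^ n * v ^ n * u ^ (κ - n) < a n * u ^ n * v ^ n * v ^ (κ - n) :=
            mul_lt_mul_of_pos_left h3
              (mul_pos (mul_pos (ha_pos n) (pow_pos hu n)) (pow_pos hv0 n))
          rw [e1, e2]
          nlinarith [h4]
        calc B u * A v = (∑' n, t (n + κ) * u ^ n) * (u ^ κ * A v) := by rw [hBC u]; ring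
          _ ≤ (∑' n, t (n + κ) * v ^ n) * (u ^ κ * A v) :=
              mul_le_mul_of_nonneg_right hCle
                (mul_nonneg (pow_nonneg hu.le κ) (hApos v hv0.le).le)
          _ < (∑' n, t (n + κ) * v ^ n) * (v ^ κ * A u) :=
              mul_lt_mul_of_pos_left hpoly hCv_pos
          _ = B v * A u := by rw [hBC v]; ring
      have hABw : ∀ w ∈ Set.Ioo (0:ℝ) 1, G w = 0 → A w = B w := fun w hw hgw => by
        have := hGAB w (by rw [abs_of_pos hw.1]; exact hw.2)
        rw [hgw] at this
        linarith
      have huniq : ∀ w ∈ Set.Ioo (0:ℝ) 1, G w = 0 → w = z := by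
        intro w hw hGw
        rcases lt_trichotomy w z with hlt | heq | hgt
        · exfalso
          have hk := key w z hw.1 hlt hz01.2
          rw [← hABw w hw hGw, ← hABw z hz01 hGz] at hk
          linarith [mul_comm (A w) (A z)]
        · exact heq
        · exfalso
          have hk := key z w hz01.1 hgt hw.2
          rw [← hABw w hw hGw, ← hABw z hz01 hGz] at hk
          linarith [mul_comm (A w) (A z)]
      -- Step 4: derivative is nonzero
      set r : ℝ := (1 + z) / 2 with hr_def
      have hzr : z < r := by rw [hr_def]; linarith [hz01.2]
      have hr1 : r < 1 := by rw [hr_def]; linarith [hz01.2]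
      have hr0 : 0 < r := by rw [hr_def]; linarith [hz01.1]
      have hsummu : Summable (fun n : ℕ => (n : ℝ) * r ^ (n - 1)) := by
        apply (summable_nat_add_iff 1).mp
        have h1 : Summable (fun k : ℕ => (k : ℝ) ^ 1 * r ^ k) :=
          summable_pow_mul_geometric_of_norm_lt_one 1
            (by rw [Real.norm_eq_abs, abs_of_pos hr0]; exact hr1)
        have h2 : Summable (fun k : ℕ => r ^ k) := summable_geometric_of_lt_one hr0.le hr1
        apply (h1.add h2).congr
        intro k
        push_cast
        simp only [Nat.add_sub_cancel, pow_one]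
        ring
      have hzmemIoo : z ∈ Set.Ioo (-r) r := ⟨by linarith [hz01.1], hzr⟩
      have hder : HasDerivAt G (∑' n, g n * ((n : ℝ) * z ^ (n - 1))) z := by
        have hmain := hasDerivAt_tsum_of_isPreconnected hsummu
          (isOpen_Ioo (a := -r) (b := r)) (convex_Ioo (-r) r).isPreconnected
          (g := fun n w => g n * w ^ n) (g' := fun n w => g n * ((n : ℝ) * w ^ (n - 1)))
          (fun n y _ => (hasDerivAt_pow n y).const_mul (g n))
          (fun n y hy => ?_) hzmemIoo (hsummg z habsz) hzmemIoo
        · have hGfun : G = fun x : ℝ => ∑' n, g n * x ^ n := funext hG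
          rw [hGfun]
          exact hmain
        · have hyr : |y| ≤ r := by
            rw [abs_le]
            exact ⟨hy.1.le, hy.2.le⟩
          rw [norm_mul, norm_mul, Real.norm_eq_abs, Real.norm_eq_abs, Real.norm_eq_abs,
            abs_pow, Nat.abs_cast]
          calc |g n| * ((n : ℝ) * |y| ^ (n - 1)) ≤ 1 * ((n : ℝ) * r ^ (n - 1)) := by
                apply mul_le_mul (habs n) _ (by positivity) zero_le_one
                exact mul_le_mul_of_nonneg_left (pow_le_pow_left₀ (abs_nonneg y) hyr _)
                  (Nat.cast_nonneg n)
            _ = (n : ℝ) * r ^ (n - 1) := one_mul _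
      have hsD : Summable (fun n => g n * ((n : ℝ) * z ^ (n - 1))) := by
        apply Summable.of_norm_bounded hsummu
        intro n
        rw [norm_mul, norm_mul, Real.norm_eq_abs, Real.norm_eq_abs, Real.norm_eq_abs,
          abs_pow, Nat.abs_cast]
        calc |g n| * ((n : ℝ) * |z| ^ (n - 1)) ≤ 1 * ((n : ℝ) * r ^ (n - 1)) := by
              apply mul_le_mul (habs n) _ (by positivity) zero_le_one
              exact mul_le_mul_of_nonneg_left
                (pow_le_pow_left₀ (abs_nonneg z) (by rw [abs_of_pos hz01.1]; exact hzr.le) _)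
                (Nat.cast_nonneg n)
          _ = (n : ℝ) * r ^ (n - 1) := one_mul _
      have hsD2 : Summable (fun n => g n * ((n : ℝ) * z ^ n)) := by
        apply Summable.of_norm_bounded
          (summable_pow_mul_geometric_of_norm_lt_one 1
            (by rw [Real.norm_eq_abs, abs_abs]; exact habsz) : Summable fun n : ℕ => (n : ℝ) ^ 1 * |z| ^ n)
        intro n
        rw [norm_mul, norm_mul, Real.norm_eq_abs, Real.norm_eq_abs, Real.norm_eq_abs,
          abs_pow, Nat.abs_cast, pow_one]
        calc |g n| * ((n : ℝ) * |z| ^ n) ≤ 1 * ((n : ℝ) * |z| ^ n) :=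
              mul_le_mul_of_nonneg_right (habs n) (by positivity)
          _ = (n : ℝ) * |z| ^ n := one_mul _
      have hzD : z * (∑' n, g n * ((n : ℝ) * z ^ (n - 1))) = ∑' n, g n * ((n : ℝ) * z ^ n) := by
        rw [← tsum_mul_left]
        apply tsum_congr
        intro n
        cases n with
        | zero => simp
        | succ k =>
          simp only [Nat.add_sub_cancel]
          rw [pow_succ]
          ring
      -- split the derivative sum
      have hsplit := hsD2.sum_add_tsum_nat_add κ
      have hP : ∑ n ∈ Finset.range κ, g n * ((n : ℝ) * z ^ n)
          ≤ ((κ : ℝ) - 1) * A z := by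
        simp only [hA_def]
        rw [Finset.mul_sum]
        refine Finset.sum_le_sum fun n hn => ?_
        have hnκ := Finset.mem_range.mp hn
        have hcast : (n : ℝ) ≤ (κ : ℝ) - 1 := by
          have : (n : ℝ) + 1 ≤ (κ : ℝ) := by exact_mod_cast Nat.succ_le_of_lt hnκ
          linarith
        rw [hglt n hnκ]
        have hz0 := hz01.1
        have hkey := mul_le_mul_of_nonneg_right hcast
          (mul_nonneg (ha_pos n).le (pow_nonneg hz0.le n))
        linarith [hkey]
      have hQ : (∑' n, g (n + κ) * (((n + κ) : ℕ) * z ^ (n + κ)))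
          ≤ -((κ : ℝ) * B z) := by
        have hs1 : Summable (fun n => g (n + κ) * (((n + κ) : ℕ) * z ^ (n + κ))) :=
          (summable_nat_add_iff κ).mpr hsD2
        have hs2 : Summable (fun n => -((κ : ℝ) * (t (n + κ) * z ^ (n + κ)))) :=
          (((hsummB z habsz).mul_left (κ : ℝ)).neg)
        have hle : ∀ n, g (n + κ) * (((n + κ) : ℕ) * z ^ (n + κ))
            ≤ -((κ : ℝ) * (t (n + κ) * z ^ (n + κ))) := by
          intro n
          rw [hgge (n + κ) (Nat.le_add_left κ n)]
          have hc : (κ : ℝ) ≤ ((n + κ : ℕ) : ℝ) := by exact_mod_cast Nat.le_add_left κ n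
          have ht' := ht_nn (n + κ)
          have hzp : (0:ℝ) ≤ z ^ (n + κ) := pow_nonneg hz01.1.le _
          have hkey := mul_le_mul_of_nonneg_right hc (mul_nonneg ht' hzp)
          linarith [hkey]
        calc (∑' n, g (n + κ) * (((n + κ) : ℕ) * z ^ (n + κ)))
            ≤ ∑' n, -((κ : ℝ) * (t (n + κ) * z ^ (n + κ))) := Summable.tsum_le_tsum hle hs1 hs2
          _ = -((κ : ℝ) * B z) := by
              rw [tsum_neg, hB_def, ← tsum_mul_left]
      have hD2neg : (∑' n, g n * ((n : ℝ) * z ^ n)) < 0 := by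
        have hAzpos := hApos z hz01.1.le
        have : (∑' n, g n * ((n : ℝ) * z ^ n))
            ≤ ((κ : ℝ) - 1) * A z - (κ : ℝ) * B z := by
          rw [← hsplit]
          have := hQ
          push_cast at this ⊢
          linarith [hP]
        rw [← hABz] at this
        linarith
      have hDneg : (∑' n, g n * ((n : ℝ) * z ^ (n - 1))) < 0 := by
        by_contra hc
        push_neg at hc
        have hmn := mul_nonneg hz01.1.le hc
        rw [hzD] at hmn
        linarith
      refine ⟨z, hz01, hGz, ?_, huniq⟩
      rw [hder.deriv]
      exact ne_of_lt hDneg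
    · -- ¬ HasSum g 0
      by_cases hst : Summable t
      · have h1 := hgsum hst
        have h2 : (κ:ℝ) < ∑' n, t n := by
          have := hEoR hst
          rw [this] at hEκ
          have : (κ:ℝ≥0∞) = ENNReal.ofReal (κ:ℝ) := by simp
          rw [this] at hEκ
          exact (ENNReal.ofReal_lt_ofReal_iff_of_nonneg (by positivity)).mp hEκ
        intro hc
        have := hc.unique h1
        linarith
      · intro hc
        exact hgnot hst hc.summable
  · -- E = κ
    intro hEκ
    have hst : Summable t := hsumt (by rw [hEκ]; exact ENNReal.natCast_ne_top κ)
    have htκ : ∑' n, t n = κ := by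
      have h1 := hEoR hst
      rw [hEκ] at h1
      have h2 : ENNReal.ofReal (κ:ℝ) = ENNReal.ofReal (∑' n, t n) := by
        rw [← h1]; simp
      have := (ENNReal.ofReal_eq_ofReal_iff (by positivity) (tsum_nonneg fun n => ht_nn n)).mp h2
      linarith
    have hTBle : TB ≤ ENNReal.ofReal (A 1) := by
      rw [hEsplit, hκsplit] at hEκ
      exact le_of_eq ((ENNReal.add_right_inj hSlt).mp hEκ)
    refine ⟨hpos hTBle, ?_⟩
    have := hgsum hst
    rwa [htκ, sub_self] at this
  · -- E < κ
    intro hEκ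
    have hst : Summable t := hsumt (hEκ.trans_le le_top).ne
    have hTBle : TB ≤ ENNReal.ofReal (A 1) := by
      rw [hEsplit, hκsplit] at hEκ
      exact le_of_lt ((ENNReal.add_lt_add_iff_left hSlt).mp hEκ)
    intro s hs
    rcases eq_or_lt_of_le hs.2 with h1 | h1
    · -- s = 1
      subst h1
      have htκ : ∑' n, t n < κ := by
        have h1 := hEoR hst
        rw [h1] at hEκ
        have : (κ:ℝ≥0∞) = ENNReal.ofReal (κ:ℝ) := by simp
        rw [this] at hEκ
        exact (ENNReal.ofReal_lt_ofReal_iff_of_nonneg (tsum_nonneg fun n => ht_nn n)).mp hEκ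
      have hg1 : G 1 = (κ:ℝ) - ∑' n, t n := by
        rw [hG 1]
        have := (hgsum hst).tsum_eq
        simpa using this
      rw [hg1]; linarith
    · exact hpos hTBle s ⟨hs.1, h1⟩
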